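/- Let g : ℝ^n → (-∞, ∞] be a proper closed convex function and ν > 0. Then for every x ∈ ℝ^n, every matrix V ∈ ∂_B prox_{νg}(x) is symmetric, positive semidefinite, and satisfies ‖V‖ ≤ 1 in operator norm. -/

import Mathlib

open Filter Topology RealInnerProductSpace

/-- The B-subdifferential of a map `F : ℝ^n → ℝ^n` at `x`: the set of limits of
derivatives `∇F(x^(k))` along sequences `x^(k) → x` of differentiability points of `F`. -/
def Bsubdiff {n : ℕ} (F : EuclideanSpace ℝ (Fin n) → EuclideanSpace ℝ (Fin n))
    (x : EuclideanSpace ℝ (Fin n)) :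
    Set (EuclideanSpace ℝ (Fin n) →L[ℝ] EuclideanSpace ℝ (Fin n)) :=
  {V | ∃ u : ℕ → EuclideanSpace ℝ (Fin n),
      Filter.Tendsto u Filter.atTop (nhds x) ∧
      (∀ k, DifferentiableAt ℝ F (u k)) ∧
      Filter.Tendsto (fun k => fderiv ℝ F (u k)) Filter.atTop (nhds V)}


variable {E : Type*} [NormedAddCommGroup E] [InnerProductSpace ℝ E]

section ProxAux

variable {g : E → EReal} {ν : ℝ} {prox : E → E}

theorem prox_finite (hg_nebot : ∀ x, g x ≠ ⊥) (hg_proper : ∃ x, g x ≠ ⊤) (hν : 0 < ν)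
    (hprox : ∀ w, IsMinOn
      (fun z => (ν : EReal) * g z + ((‖z - w‖ ^ 2 / 2 : ℝ) : EReal)) Set.univ (prox w))
    (w : E) : g (prox w) = ((g (prox w)).toReal : EReal) := by
  refine (EReal.coe_toReal ?_ (hg_nebot _)).symm
  intro htop
  obtain ⟨x0, hx0⟩ := hg_proper
  have h := hprox w (Set.mem_univ x0)
  simp only [Set.mem_setOf_eq] at h
  rw [htop] at h
  have hx0' : g x0 = ((g x0).toReal : EReal) := (EReal.coe_toReal hx0 (hg_nebot x0)).symm
  rw [hx0', EReal.coe_mul_top_of_pos hν, ← EReal.coe_mul, ← EReal.coe_add] at h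
  have : ((ν * (g x0).toReal + ‖x0 - w‖ ^ 2 / 2 : ℝ) : EReal) < ⊤ := EReal.coe_lt_top _
  rw [EReal.top_add_coe _] at h
  exact absurd h (not_le.mpr this)

set_option linter.unusedSectionVars false

theorem prox_min_real (hg_nebot : ∀ x, g x ≠ ⊥) (hg_proper : ∃ x, g x ≠ ⊤) (hν : 0 < ν)
    (hprox : ∀ w, IsMinOn
      (fun z => (ν : EReal) * g z + ((‖z - w‖ ^ 2 / 2 : ℝ) : EReal)) Set.univ (prox w))
    (w z : E) (r : ℝ) (hz : g z = (r : EReal)) :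
    ν * (g (prox w)).toReal + ‖prox w - w‖ ^ 2 / 2 ≤ ν * r + ‖z - w‖ ^ 2 / 2 := by
  have h := hprox w (Set.mem_univ z)
  simp only [Set.mem_setOf_eq] at h
  rw [hz, prox_finite hg_nebot hg_proper hν hprox w, ← EReal.coe_mul, ← EReal.coe_mul,
    ← EReal.coe_add, ← EReal.coe_add, EReal.coe_le_coe_iff] at h
  exact h

theorem prox_varineq (hg_nebot : ∀ x, g x ≠ ⊥) (hg_proper : ∃ x, g x ≠ ⊤)
    (hg_conv : ∀ x y : E, ∀ a b : ℝ, 0 ≤ a → 0 ≤ b → a + b = 1 →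
      g (a • x + b • y) ≤ (a : EReal) * g x + (b : EReal) * g y)
    (hν : 0 < ν)
    (hprox : ∀ w, IsMinOn
      (fun z => (ν : EReal) * g z + ((‖z - w‖ ^ 2 / 2 : ℝ) : EReal)) Set.univ (prox w))
    (u v : E) :
    0 ≤ ν * ((g (prox v)).toReal - (g (prox u)).toReal) + ⟪prox v - prox u, prox u - u⟫ := by
  set p := prox u with hp
  set q := prox v with hq
  set rp := (g p).toReal with hrp
  set rq := (g q).toReal with hrq
  have hgp : g p = (rp : EReal) := prox_finite hg_nebot hg_proper hν hprox u
  have hgq : g q = (rq : EReal) := prox_finite hg_nebot hg_proper hν hprox v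
  have key : ∀ t : ℝ, t ∈ Set.Ioc (0:ℝ) 1 →
      0 ≤ ν * (rq - rp) + ⟪q - p, p - u⟫ + t * (‖q - p‖ ^ 2 / 2) := by
    intro t ht
    have ht0 : 0 < t := ht.1
    have ht1 : t ≤ 1 := ht.2
    set zt := (1 - t) • p + t • q with hzt
    have hconv := hg_conv p q (1 - t) t (by linarith) ht0.le (by ring)
    rw [hgp, hgq, ← EReal.coe_mul, ← EReal.coe_mul, ← EReal.coe_add] at hconv
    have hztne : g zt ≠ ⊤ := ne_top_of_le_ne_top (EReal.coe_ne_top _) hconv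
    have hztr : g zt = ((g zt).toReal : EReal) := (EReal.coe_toReal hztne (hg_nebot _)).symm
    set rt := (g zt).toReal with hrt
    have hrtle : rt ≤ (1 - t) * rp + t * rq := by
      rw [hztr, EReal.coe_le_coe_iff] at hconv; exact hconv
    have hmin := prox_min_real hg_nebot hg_proper hν hprox u zt rt hztr
    have hztu : zt - u = (p - u) + t • (q - p) := by
      rw [hzt]; rw [sub_smul, one_smul, smul_sub]; abel
    have hnorm : ‖zt - u‖ ^ 2
        = ‖p - u‖ ^ 2 + 2 * (t * ⟪p - u, q - p⟫) + t ^ 2 * ‖q - p‖ ^ 2 := by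
      rw [hztu, norm_add_sq_real, real_inner_smul_right, norm_smul, Real.norm_eq_abs,
        abs_of_pos ht0, mul_pow]
    rw [hnorm] at hmin
    have hcomm : ⟪q - p, p - u⟫ = ⟪p - u, q - p⟫ := real_inner_comm _ _
    have hmul : 0 ≤ t * (ν * (rq - rp) + ⟪q - p, p - u⟫ + t * (‖q - p‖ ^ 2 / 2)) := by
      have hν' := hν.le
      nlinarith [hmin, hrtle]
    exact nonneg_of_mul_nonneg_right hmul ht0
  have hlim : Tendsto (fun t : ℝ => ν * (rq - rp) + ⟪q - p, p - u⟫ + t * (‖q - p‖ ^ 2 / 2))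
      (𝓝[>] (0:ℝ)) (𝓝 (ν * (rq - rp) + ⟪q - p, p - u⟫)) := by
    have hc : Continuous fun t : ℝ => ν * (rq - rp) + ⟪q - p, p - u⟫ + t * (‖q - p‖ ^ 2 / 2) :=
      by fun_prop
    have := (hc.tendsto 0).mono_left (nhdsWithin_le_nhds (s := Set.Ioi (0:ℝ)))
    simpa using this
  refine ge_of_tendsto hlim ?_
  filter_upwards [Ioc_mem_nhdsGT_of_mem (Set.left_mem_Ico.mpr one_pos)] with t ht
  exact key t ht

theorem prox_firm (hg_nebot : ∀ x, g x ≠ ⊥) (hg_proper : ∃ x, g x ≠ ⊤)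
    (hg_conv : ∀ x y : E, ∀ a b : ℝ, 0 ≤ a → 0 ≤ b → a + b = 1 →
      g (a • x + b • y) ≤ (a : EReal) * g x + (b : EReal) * g y)
    (hν : 0 < ν)
    (hprox : ∀ w, IsMinOn
      (fun z => (ν : EReal) * g z + ((‖z - w‖ ^ 2 / 2 : ℝ) : EReal)) Set.univ (prox w))
    (u v : E) : ‖prox v - prox u‖ ^ 2 ≤ ⟪prox v - prox u, v - u⟫ := by
  have h1 := prox_varineq hg_nebot hg_proper hg_conv hν hprox u v
  have h2 := prox_varineq hg_nebot hg_proper hg_conv hν hprox v u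
  have e1 : (prox u - prox v : E) = -(prox v - prox u) := by abel
  rw [e1, inner_neg_left] at h2
  have e2 : ⟪prox v - prox u, prox u - u⟫ - ⟪prox v - prox u, prox v - v⟫
      = ⟪prox v - prox u, v - u⟫ - ⟪prox v - prox u, prox v - prox u⟫ := by
    rw [← inner_sub_right, ← inner_sub_right]
    congr 1
    abel
  rw [real_inner_self_eq_norm_sq] at e2
  linarith

theorem prox_lip (hg_nebot : ∀ x, g x ≠ ⊥) (hg_proper : ∃ x, g x ≠ ⊤)
    (hg_conv : ∀ x y : E, ∀ a b : ℝ, 0 ≤ a → 0 ≤ b → a + b = 1 →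
      g (a • x + b • y) ≤ (a : EReal) * g x + (b : EReal) * g y)
    (hν : 0 < ν)
    (hprox : ∀ w, IsMinOn
      (fun z => (ν : EReal) * g z + ((‖z - w‖ ^ 2 / 2 : ℝ) : EReal)) Set.univ (prox w))
    (u v : E) : ‖prox v - prox u‖ ≤ ‖v - u‖ := by
  have h := prox_firm hg_nebot hg_proper hg_conv hν hprox u v
  have hcs := real_inner_le_norm (prox v - prox u) (v - u)
  nlinarith [norm_nonneg (prox v - prox u), norm_nonneg (v - u)]

theorem env_upper (hg_nebot : ∀ x, g x ≠ ⊥) (hg_proper : ∃ x, g x ≠ ⊤) (hν : 0 < ν)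
    (hprox : ∀ w, IsMinOn
      (fun z => (ν : EReal) * g z + ((‖z - w‖ ^ 2 / 2 : ℝ) : EReal)) Set.univ (prox w))
    (u v : E) :
    ν * (g (prox v)).toReal + ‖prox v - v‖ ^ 2 / 2
      ≤ ν * (g (prox u)).toReal + ‖prox u - u‖ ^ 2 / 2 + ⟪u - prox u, v - u⟫
        + ‖v - u‖ ^ 2 / 2 := by
  have h := prox_min_real hg_nebot hg_proper hν hprox v (prox u) ((g (prox u)).toReal)
    (prox_finite hg_nebot hg_proper hν hprox u)
  have hsplit : (prox u - v : E) = (prox u - u) - (v - u) := by abel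
  have hexp : ‖prox u - v‖ ^ 2
      = ‖prox u - u‖ ^ 2 - 2 * ⟪prox u - u, v - u⟫ + ‖v - u‖ ^ 2 := by
    rw [hsplit, norm_sub_sq_real]
  have hin : ⟪u - prox u, v - u⟫ = - ⟪prox u - u, v - u⟫ := by
    rw [show (u - prox u : E) = -(prox u - u) by abel, inner_neg_left]
  linarith

theorem env_hasFDeriv (hg_nebot : ∀ x, g x ≠ ⊥) (hg_proper : ∃ x, g x ≠ ⊤)
    (hg_conv : ∀ x y : E, ∀ a b : ℝ, 0 ≤ a → 0 ≤ b → a + b = 1 →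
      g (a • x + b • y) ≤ (a : EReal) * g x + (b : EReal) * g y)
    (hν : 0 < ν)
    (hprox : ∀ w, IsMinOn
      (fun z => (ν : EReal) * g z + ((‖z - w‖ ^ 2 / 2 : ℝ) : EReal)) Set.univ (prox w))
    (u : E) :
    HasFDerivAt (fun w => ν * (g (prox w)).toReal + ‖prox w - w‖ ^ 2 / 2)
      (innerSL ℝ (u - prox u)) u := by
  set e : E → ℝ := fun w => ν * (g (prox w)).toReal + ‖prox w - w‖ ^ 2 / 2 with he
  clear_value e
  have key : ∀ v : E, |e v - e u - ⟪u - prox u, v - u⟫| ≤ 3 * ‖v - u‖ ^ 2 := by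
    intro v
    have h1 := env_upper hg_nebot hg_proper hν hprox u v
    have h2 := env_upper hg_nebot hg_proper hν hprox v u
    have hlip := prox_lip hg_nebot hg_proper hg_conv hν hprox u v
    have habs := abs_real_inner_le_norm ((v - u) - (prox v - prox u)) (v - u)
    have htr : ‖(v - u) - (prox v - prox u)‖ ≤ ‖v - u‖ + ‖prox v - prox u‖ :=
      norm_sub_le _ _
    have hcs : -(2 * ‖v - u‖ ^ 2) ≤ ⟪(v - u) - (prox v - prox u), v - u⟫ := by
      have h3 := abs_le.mp habs
      nlinarith [norm_nonneg (v - u), norm_nonneg ((v - u) - (prox v - prox u))]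
    have hrw : ⟪v - prox v, u - v⟫ + ⟪u - prox u, v - u⟫
        = - ⟪(v - u) - (prox v - prox u), v - u⟫ := by
      rw [show (v - prox v : E) = -(prox v - v) by abel,
        show (u - v : E) = -(v - u) by abel, inner_neg_neg, ← inner_add_left, ← inner_neg_left]
      congr 1
      abel
    have hnn : (0:ℝ) ≤ ‖v - u‖ ^ 2 := sq_nonneg _
    have hn2 : ‖u - v‖ = ‖v - u‖ := norm_sub_rev _ _
    have h1' : e v ≤ e u + ‖v - u‖ ^ 2 / 2 + ⟪u - prox u, v - u⟫ := by
      have := h1; simp only [he]; linarith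
    have h2' : e u ≤ e v + ⟪v - prox v, u - v⟫ + ‖v - u‖ ^ 2 / 2 := by
      have := h2; simp only [he]; rw [← hn2]; linarith
    rw [abs_le]
    constructor
    · linarith [h2', hrw, hcs, hnn]
    · linarith [h1', hnn]
  rw [hasFDerivAt_iff_isLittleO_nhds_zero]
  rw [Asymptotics.isLittleO_iff]
  intro c hc
  filter_upwards [Metric.ball_mem_nhds (0:E) (by positivity : (0:ℝ) < c / 3)] with h hball
  have hnb : ‖h‖ < c / 3 := by
    rwa [Metric.mem_ball, dist_zero_right] at hball
  have hb := key (u + h)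
  have hsub : (u + h) - u = h := by abel
  rw [hsub] at hb
  have : ‖e (u + h) - e u - (innerSL ℝ (u - prox u)) h‖ ≤ 3 * ‖h‖ ^ 2 := by
    simpa only [Real.norm_eq_abs, innerSL_apply_apply] using hb
  calc ‖e (u + h) - e u - (innerSL ℝ (u - prox u)) h‖ ≤ 3 * ‖h‖ ^ 2 := this
    _ = (3 * ‖h‖) * ‖h‖ := by ring
    _ ≤ c * ‖h‖ := by nlinarith [norm_nonneg h]

theorem prox_fderiv_symm (hg_nebot : ∀ x, g x ≠ ⊥) (hg_proper : ∃ x, g x ≠ ⊤)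
    (hg_conv : ∀ x y : E, ∀ a b : ℝ, 0 ≤ a → 0 ≤ b → a + b = 1 →
      g (a • x + b • y) ≤ (a : EReal) * g x + (b : EReal) * g y)
    (hν : 0 < ν)
    (hprox : ∀ w, IsMinOn
      (fun z => (ν : EReal) * g z + ((‖z - w‖ ^ 2 / 2 : ℝ) : EReal)) Set.univ (prox w))
    (u : E) (hu : DifferentiableAt ℝ prox u) (a b : E) :
    ⟪fderiv ℝ prox u a, b⟫ = ⟪fderiv ℝ prox u b, a⟫ := by
  set D := fderiv ℝ prox u with hD
  have hf : ∀ y, HasFDerivAt (fun w => ν * (g (prox w)).toReal + ‖prox w - w‖ ^ 2 / 2)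
      (innerSL ℝ (y - prox y)) y :=
    fun y => env_hasFDeriv hg_nebot hg_proper hg_conv hν hprox y
  have hid : HasFDerivAt (fun y : E => y - prox y)
      (ContinuousLinearMap.id ℝ E - D) u := (hasFDerivAt_id u).sub hu.hasFDerivAt
  have h2 : HasFDerivAt (fun y : E => innerSL ℝ (y - prox y))
      ((innerSL ℝ).comp (ContinuousLinearMap.id ℝ E - D)) u :=
    (innerSL ℝ (E := E)).hasFDerivAt.comp u hid
  have hsymm := second_derivative_symmetric hf h2 a b
  simp only [ContinuousLinearMap.comp_apply, ContinuousLinearMap.sub_apply,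
    ContinuousLinearMap.id_apply, innerSL_apply_apply, inner_sub_left] at hsymm
  have hc := real_inner_comm a b
  linarith

theorem prox_fderiv_firm (hg_nebot : ∀ x, g x ≠ ⊥) (hg_proper : ∃ x, g x ≠ ⊤)
    (hg_conv : ∀ x y : E, ∀ a b : ℝ, 0 ≤ a → 0 ≤ b → a + b = 1 →
      g (a • x + b • y) ≤ (a : EReal) * g x + (b : EReal) * g y)
    (hν : 0 < ν)
    (hprox : ∀ w, IsMinOn
      (fun z => (ν : EReal) * g z + ((‖z - w‖ ^ 2 / 2 : ℝ) : EReal)) Set.univ (prox w))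
    (u : E) (hu : DifferentiableAt ℝ prox u) (h : E) :
    ‖fderiv ℝ prox u h‖ ^ 2 ≤ ⟪fderiv ℝ prox u h, h⟫ := by
  set D := fderiv ℝ prox u with hD
  have hline : HasDerivAt (fun t : ℝ => prox (u + t • h)) (D h) 0 := by
    have h1 : HasDerivAt (fun t : ℝ => u + t • h) h 0 := by
      simpa using ((hasDerivAt_id (0:ℝ)).smul_const h).const_add u
    have h0 : HasFDerivAt prox D ((fun t : ℝ => u + t • h) 0) := by
      simpa using hu.hasFDerivAt
    exact h0.comp_hasDerivAt 0 h1
  have hslope : Tendsto (fun t : ℝ => t⁻¹ • (prox (u + t • h) - prox u)) (𝓝[>] (0:ℝ))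
      (𝓝 (D h)) := by
    have hmono : 𝓝[>] (0:ℝ) ≤ 𝓝[≠] (0:ℝ) :=
      nhdsWithin_mono _ (fun t ht => ne_of_gt ht)
    have := (hasDerivAt_iff_tendsto_slope.mp hline).mono_left hmono
    refine this.congr' ?_
    filter_upwards [self_mem_nhdsWithin] with t ht
    simp [slope_def_module, sub_zero]
  have hineq : ∀ᶠ t in 𝓝[>] (0:ℝ),
      ‖t⁻¹ • (prox (u + t • h) - prox u)‖ ^ 2
        ≤ ⟪t⁻¹ • (prox (u + t • h) - prox u), h⟫ := by
    filter_upwards [self_mem_nhdsWithin] with t ht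
    have ht0 : (0:ℝ) < t := ht
    have hf := prox_firm hg_nebot hg_proper hg_conv hν hprox u (u + t • h)
    have hsub : (u + t • h) - u = t • h := by abel
    rw [hsub, real_inner_smul_right] at hf
    rw [norm_smul, real_inner_smul_left, Real.norm_eq_abs, abs_of_pos (inv_pos.mpr ht0),
      mul_pow]
    set d := prox (u + t • h) - prox u
    have hmul := mul_le_mul_of_nonneg_left hf (by positivity : (0:ℝ) ≤ t⁻¹ * t⁻¹)
    calc t⁻¹ ^ 2 * ‖d‖ ^ 2 = t⁻¹ * t⁻¹ * ‖d‖ ^ 2 := by ring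
      _ ≤ t⁻¹ * t⁻¹ * (t * ⟪d, h⟫) := hmul
      _ = t⁻¹ * ⟪d, h⟫ := by field_simp
  have h1 : Tendsto (fun t : ℝ => ‖t⁻¹ • (prox (u + t • h) - prox u)‖ ^ 2) (𝓝[>] (0:ℝ))
      (𝓝 (‖D h‖ ^ 2)) := (hslope.norm).pow 2
  have h2 : Tendsto (fun t : ℝ => ⟪t⁻¹ • (prox (u + t • h) - prox u), h⟫) (𝓝[>] (0:ℝ))
      (𝓝 ⟪D h, h⟫) := hslope.inner tendsto_const_nhds
  exact le_of_tendsto_of_tendsto h1 h2 hineq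

end ProxAux

/-- Theorem A.2. For a proper closed convex `g` and `ν > 0`, every
`V ∈ ∂_B prox_{νg}(x)` is symmetric, positive semidefinite, and has operator norm at
most `1`. -/
theorem statement11 {n : ℕ} (g : EuclideanSpace ℝ (Fin n) → EReal)
    (hg_nebot : ∀ x, g x ≠ ⊥) (hg_proper : ∃ x, g x ≠ ⊤)
    (hg_closed : LowerSemicontinuous g)
    (hg_conv : ∀ x y : EuclideanSpace ℝ (Fin n), ∀ a b : ℝ, 0 ≤ a → 0 ≤ b → a + b = 1 →
      g (a • x + b • y) ≤ (a : EReal) * g x + (b : EReal) * g y)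
    (ν : ℝ) (hν : 0 < ν)
    (prox : EuclideanSpace ℝ (Fin n) → EuclideanSpace ℝ (Fin n))
    (hprox : ∀ w, IsMinOn
      (fun z => (ν : EReal) * g z + ((‖z - w‖ ^ 2 / 2 : ℝ) : EReal)) Set.univ (prox w))
    (x : EuclideanSpace ℝ (Fin n))
    (V : EuclideanSpace ℝ (Fin n) →L[ℝ] EuclideanSpace ℝ (Fin n))
    (hV : V ∈ Bsubdiff prox x) :
    (∀ a b : EuclideanSpace ℝ (Fin n), ⟪V a, b⟫ = ⟪a, V b⟫) ∧
    (∀ a : EuclideanSpace ℝ (Fin n), 0 ≤ ⟪a, V a⟫) ∧ ‖V‖ ≤ 1 := by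
  obtain ⟨u, hux, hdiff, hlim⟩ := hV
  set D : ℕ → EuclideanSpace ℝ (Fin n) →L[ℝ] EuclideanSpace ℝ (Fin n) :=
    fun k => fderiv ℝ prox (u k) with hDdef
  have happly : ∀ a : EuclideanSpace ℝ (Fin n),
      Tendsto (fun k => D k a) atTop (𝓝 (V a)) := fun a =>
    ((ContinuousLinearMap.apply ℝ (EuclideanSpace ℝ (Fin n)) a).continuous.tendsto V).comp hlim
  refine ⟨?_, ?_, ?_⟩
  · intro a b
    have h1 : Tendsto (fun k => ⟪D k a, b⟫) atTop (𝓝 ⟪V a, b⟫) :=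
      (happly a).inner tendsto_const_nhds
    have h2 : Tendsto (fun k => ⟪D k b, a⟫) atTop (𝓝 ⟪V b, a⟫) :=
      (happly b).inner tendsto_const_nhds
    have heq : (fun k => ⟪D k a, b⟫) = fun k => ⟪D k b, a⟫ :=
      funext fun k => prox_fderiv_symm hg_nebot hg_proper hg_conv hν hprox (u k) (hdiff k) a b
    have := tendsto_nhds_unique (heq ▸ h1) h2
    rw [this, real_inner_comm]
  · intro a
    have hk : ∀ k, 0 ≤ ⟪D k a, a⟫ := fun k =>
      le_trans (sq_nonneg _) (prox_fderiv_firm hg_nebot hg_proper hg_conv hν hprox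
        (u k) (hdiff k) a)
    have h1 : Tendsto (fun k => ⟪D k a, a⟫) atTop (𝓝 ⟪V a, a⟫) :=
      (happly a).inner tendsto_const_nhds
    rw [real_inner_comm]
    exact ge_of_tendsto' h1 hk
  · refine V.opNorm_le_bound zero_le_one (fun a => ?_)
    have hk : ∀ k, ‖D k a‖ ≤ ‖a‖ := by
      intro k
      have h1 := prox_fderiv_firm hg_nebot hg_proper hg_conv hν hprox (u k) (hdiff k) a
      have h2 := real_inner_le_norm (D k a) a
      nlinarith [norm_nonneg (D k a), norm_nonneg a]
    have := le_of_tendsto ((happly a).norm) (Eventually.of_forall hk)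
    simpa using this
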